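/- For every time step t ≤ m there exists a set S_t of exactly t − μ(a₁,t) items such that, for every ranking ≻ reported by the manipulator a₁, S_t is contained in the set of items picked during the first t steps of the allocation process under report ≻. -/

import Mathlib

/-- One step of the sequential allocation process: an agent with ranking `rk`
(a bijection `Fin m ≃ Fin m`, lower rank = more preferred) greedily picks the
lowest-rank item among the remaining ones (the complement of the already
picked set `S`); if nothing is left, nothing happens. -/
def pickStep {m : ℕ} (rk : Fin m ≃ Fin m) (S : Finset (Fin m)) : Finset (Fin m) :=
  S ∪ Sᶜ.filter fun i => ∀ j ∈ Sᶜ, rk i ≤ rk j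

/-- `pickedSeq rpt π` : the set of items picked after running the sequential
allocation process along the (finite) picking sequence `π`, where agent `a`
reports the ranking `rpt a`.  The set picked after the first `t` steps is
`pickedSeq rpt (π.take t)`. -/
def pickedSeq {A : Type*} {m : ℕ} (rpt : A → Fin m ≃ Fin m) (π : List A) :
    Finset (Fin m) :=
  π.foldl (fun S a => pickStep (rpt a) S) ∅

/-- for every time step `t ≤ m` there is a set `St` of exactly
`t − μ(a₁,t)` items that is contained in the set of items picked during the
first `t` steps, whatever ranking `r` the manipulator `a₁` reports
(non-manipulators reporting their truthful rankings `rk`);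
here `μ(a₁,t) = |{s ≤ t : π(s) = a₁}|` is the number of picks of `a₁` among the
first `t` steps. -/

lemma pickedSeq_append {A : Type*} {m : ℕ} (rpt : A → Fin m ≃ Fin m) (L : List A) (a : A) :
    pickedSeq rpt (L ++ [a]) = pickStep (rpt a) (pickedSeq rpt L) := by
  simp [pickedSeq, List.foldl_append]

lemma statement6_aux {A : Type*} [DecidableEq A] {m : ℕ} (a₁ : A)
    (rk : A → Fin m ≃ Fin m) :
    ∀ L : List A, L.length ≤ m →
    ∃ St : Finset (Fin m), St.card = L.length - L.count a₁ ∧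
      ∀ r : Fin m ≃ Fin m, St ⊆ pickedSeq (Function.update rk a₁ r) L := by
  intro L
  induction L using List.reverseRecOn with
  | nil => exact fun _ => ⟨∅, by simp, fun r => by simp⟩
  | append_singleton L a ih =>
    intro hlen
    simp only [List.length_append, List.length_singleton] at hlen
    obtain ⟨St, hcard, hsub⟩ := ih (by omega)
    have hcnt : L.count a₁ ≤ L.length := List.count_le_length
    by_cases ha : a = a₁
    · subst ha
      refine ⟨St, ?_, fun r => ?_⟩
      · rw [hcard]
        simp only [List.count_append, List.count_singleton, beq_self_eq_true, if_true, List.length_append, List.length_singleton]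
        omega
      · rw [pickedSeq_append]
        exact (hsub r).trans Finset.subset_union_left
    · -- non-manipulator step
      have hStcard : St.card < m := by omega
      have hcompl : (Stᶜ : Finset (Fin m)).Nonempty := by
        rw [← Finset.card_pos, Finset.card_compl, Fintype.card_fin]
        omega
      obtain ⟨i, hi, hmin⟩ := Finset.exists_min_image Stᶜ (fun j => rk a j) hcompl
      have hiSt : i ∉ St := by simpa using hi
      refine ⟨insert i St, ?_, fun r => ?_⟩
      · rw [Finset.card_insert_of_notMem hiSt, hcard]
        simp [List.count_append, List.count_singleton, ha]
        omega
      · rw [pickedSeq_append]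
        have hupd : Function.update rk a₁ r a = rk a := Function.update_of_ne ha _ _
        rw [hupd]
        set P := pickedSeq (Function.update rk a₁ r) L with hP
        have hSP : St ⊆ P := hsub r
        intro x hx
        rcases Finset.mem_insert.mp hx with rfl | hxSt
        · by_cases hxP : x ∈ P
          · exact Finset.mem_union_left _ hxP
          · refine Finset.mem_union_right _ (Finset.mem_filter.mpr ⟨by simpa using hxP, ?_⟩)
            intro j hj
            exact hmin j (Finset.compl_subset_compl.mpr hSP hj)
        · exact Finset.mem_union_left _ (hSP hxSt)

theorem statement6 {A : Type*} [DecidableEq A] {m : ℕ} (a₁ : A)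
    (rk : A → Fin m ≃ Fin m) (π : List A) (hπ : π.length = m)
    (t : ℕ) (ht : t ≤ m) :
    ∃ St : Finset (Fin m), St.card = t - (π.take t).count a₁ ∧
      ∀ r : Fin m ≃ Fin m,
        St ⊆ pickedSeq (Function.update rk a₁ r) (π.take t) := by
  have hlen : (π.take t).length = t := by
    rw [List.length_take, hπ]; omega
  obtain ⟨St, hc, hs⟩ := statement6_aux a₁ rk (π.take t) (by omega)
  exact ⟨St, by rw [hc, hlen], hs⟩
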